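/- Let F : ℝ≥0 → [0,1] be a cumulative distribution function with revenue curve R(w) = w(1 − F(w)). Suppose for some r ≥ 0 that R is non-increasing on [r,∞) and F is concave on [r,∞). Then for all x, y ≥ r, z = αx + (1−α)y with α ∈ [0,1], we have R(z) ≤ 4αR(x) + 4(1−α)R(y). Consequently there exists a convex non-increasing function R̂ on [r,∞) with R̂(w) ≤ R(w) ≤ 4R̂(w) for all w ≥ r. -/
import Mathlib

set_option maxHeartbeats 1000000

lemma npoint (F : ℝ → ℝ) (hFmono : Monotone F)
    (hF1 : ∀ w, F w ≤ 1)
    (R : ℝ → ℝ) (hR : ∀ w, R w = w * (1 - F w))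
    (r : ℝ) (hr : 0 ≤ r)
    (hRmono : AntitoneOn R (Set.Ici r))
    (hFconc : ConcaveOn ℝ (Set.Ici r) F)
    (n : ℕ) (x l : Fin n → ℝ) (hx : ∀ i, r ≤ x i) (hl : ∀ i, 0 ≤ l i)
    (hl1 : ∑ i, l i = 1) :
    R (∑ i, l i * x i) ≤ 4 * ∑ i, l i * R (x i) := by
  have hR0 : ∀ u, r ≤ u → 0 ≤ R u := by
    intro u hu
    rw [hR]
    exact mul_nonneg (le_trans hr hu) (by linarith [hF1 u])
  set w := ∑ i, l i * x i with hw
  have hSx0 : 0 ≤ ∑ i, l i * R (x i) :=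
    Finset.sum_nonneg fun i _ => mul_nonneg (hl i) (hR0 _ (hx i))
  have hrw : r ≤ w := by
    calc r = ∑ i, l i * r := by rw [← Finset.sum_mul, hl1, one_mul]
    _ ≤ w := Finset.sum_le_sum fun i _ => mul_le_mul_of_nonneg_left (hx i) (hl i)
  have hw0 : 0 ≤ w := le_trans hr hrw
  set m := max (w / 2) r with hm
  have hmr : r ≤ m := le_max_right _ _
  have hmw : m ≤ w := max_le (by linarith) hrw
  have h2m : w ≤ 2 * m := by have := le_max_left (w / 2) r; linarith
  have h2mr : 2 * m ≤ w + r := by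
    rcases le_total (w / 2) r with h | h
    · rw [hm, max_eq_right h]; linarith
    · rw [hm, max_eq_left h]; linarith
  set y := fun i => max (x i) m with hy
  have hyx : ∀ i, x i ≤ y i := fun i => le_max_left _ _
  have hym : ∀ i, m ≤ y i := fun i => le_max_right _ _
  have hyr : ∀ i, r ≤ y i := fun i => le_trans hmr (hym i)
  have hRyx : ∀ i, R (y i) ≤ R (x i) := fun i => hRmono (hx i) (hyr i) (hyx i)
  set w' := ∑ i, l i * y i with hw'
  have hww' : w ≤ w' :=
    Finset.sum_le_sum fun i _ => mul_le_mul_of_nonneg_left (hyx i) (hl i)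
  have hw'r : r ≤ w' := le_trans hrw hww'
  set ν := ∑ i ∈ Finset.univ.filter (fun i => x i < m), l i with hν
  have hν0 : 0 ≤ ν := Finset.sum_nonneg fun i _ => hl i
  have key1 : w' - w ≤ ν * (m - r) := by
    have h1 : w' - w = ∑ i, l i * (y i - x i) := by
      rw [hw', hw, ← Finset.sum_sub_distrib]
      congr 1; ext i; ring
    rw [h1]
    have h2 : ∑ i, l i * (y i - x i)
        = ∑ i ∈ Finset.univ.filter (fun i => x i < m), l i * (y i - x i) := by
      symm
      apply Finset.sum_subset (Finset.filter_subset _ _)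
      intro i _ hi
      simp only [Finset.mem_filter, Finset.mem_univ, true_and, not_lt] at hi
      have : y i = x i := max_eq_left hi
      rw [this]; ring
    rw [h2, hν, Finset.sum_mul]
    apply Finset.sum_le_sum
    intro i hi
    simp only [Finset.mem_filter, Finset.mem_univ, true_and] at hi
    have : y i = m := max_eq_right hi.le
    have := hx i
    nlinarith [hl i]
  have key2 : ν * R m ≤ ∑ i, l i * R (x i) := by
    have h2 : ∑ i ∈ Finset.univ.filter (fun i => x i < m), l i * R (x i)
        ≤ ∑ i, l i * R (x i) := by
      apply Finset.sum_le_sum_of_subset_of_nonneg (Finset.filter_subset _ _)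
      intro i _ _
      exact mul_nonneg (hl i) (hR0 _ (hx i))
    refine le_trans ?_ h2
    rw [hν, Finset.sum_mul]
    apply Finset.sum_le_sum
    intro i hi
    simp only [Finset.mem_filter, Finset.mem_univ, true_and] at hi
    exact mul_le_mul_of_nonneg_left (hRmono (hx i) hmr hi.le) (hl i)
  clear_value w m y w' ν
  -- the coefficient c
  set c := if m < w' then (w' - w) / (w' - m) else 0 with hc
  have hc0 : 0 ≤ c := by
    rw [hc]; split
    · apply div_nonneg <;> linarith
    · exact le_refl 0
  have hcν : c ≤ ν := by
    rw [hc]; split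
    case isTrue h =>
      rw [div_le_iff₀ (by linarith)]
      calc w' - w ≤ ν * (m - r) := key1
      _ ≤ ν * (w' - m) := by nlinarith
    case isFalse h =>
      exact hν0
  have hc1 : c ≤ 1 := by
    have hν1 : ν ≤ 1 := by
      rw [← hl1, hν]
      exact Finset.sum_le_sum_of_subset_of_nonneg (Finset.filter_subset _ _)
        (fun i _ _ => hl i)
    linarith
  have hcomb : (1 - c) * w' + c * m = w := by
    rw [hc]; split
    case isTrue h =>
      have h1 : (w' - w) / (w' - m) * (w' - m) = w' - w :=
        div_mul_cancel₀ _ (ne_of_gt (by linarith))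
      linear_combination (-1 : ℝ) * h1
    case isFalse h =>
      have : w' = w := le_antisymm (by push_neg at h; linarith) hww'
      simp [this]
  clear_value c
  -- Jensen
  have jensen_n : ∑ i, l i * F (y i) ≤ F w' := by
    have h := hFconc.le_map_sum (t := Finset.univ) (w := l) (p := y)
      (fun i _ => hl i) hl1 (fun i _ => hyr i)
    rw [hw']
    simpa [smul_eq_mul] using h
  have jensen2 : (1 - c) * F w' + c * F m ≤ F w := by
    have := hFconc.2 (Set.mem_Ici.mpr hw'r) (Set.mem_Ici.mpr hmr)
      (by linarith : (0:ℝ) ≤ 1 - c) hc0 (by ring)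
    simpa [smul_eq_mul, hcomb] using this
  -- main chain
  have hsum1 : ∑ i, l i * (1 - F (y i)) = 1 - ∑ i, l i * F (y i) := by
    have : ∑ i, l i * (1 - F (y i)) = ∑ i, (l i - l i * F (y i)) := by
      congr 1; ext i; ring
    rw [this, Finset.sum_sub_distrib, hl1]
  have hFw : 1 - F w ≤ (1 - c) * (∑ i, l i * (1 - F (y i))) + c * (1 - F m) := by
    rw [hsum1]; nlinarith [jensen_n, jensen2]
  have step1 : R w ≤ (1 - c) * (∑ i, l i * (w * (1 - F (y i)))) + c * (w * (1 - F m)) := by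
    rw [hR]
    have := mul_le_mul_of_nonneg_left hFw hw0
    calc w * (1 - F w) ≤ w * ((1 - c) * (∑ i, l i * (1 - F (y i))) + c * (1 - F m)) := this
    _ = (1 - c) * (∑ i, l i * (w * (1 - F (y i)))) + c * (w * (1 - F m)) := by
        have hws : ∑ i, l i * (w * (1 - F (y i))) = w * ∑ i, l i * (1 - F (y i)) := by
          rw [Finset.mul_sum]; exact Finset.sum_congr rfl (fun i _ => by ring)
        rw [hws]; ring
  have hterm : ∀ i, w * (1 - F (y i)) ≤ 2 * R (y i) := by
    intro i
    rw [hR]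
    have h1 : 0 ≤ 1 - F (y i) := by linarith [hF1 (y i)]
    have h2 : w ≤ 2 * y i := le_trans h2m (by linarith [hym i])
    nlinarith
  have htermm : w * (1 - F m) ≤ 2 * R m := by
    rw [hR]
    have h1 : 0 ≤ 1 - F m := by linarith [hF1 m]
    nlinarith
  have step2 : R w ≤ (1 - c) * (∑ i, l i * (2 * R (x i))) + c * (2 * R m) := by
    refine le_trans step1 ?_
    have hA : ∑ i, l i * (w * (1 - F (y i))) ≤ ∑ i, l i * (2 * R (x i)) :=
      Finset.sum_le_sum fun i _ => mul_le_mul_of_nonneg_left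
        (le_trans (hterm i) (by linarith [hRyx i])) (hl i)
    have hB : w * (1 - F m) ≤ 2 * R m := htermm
    have h1c : (0:ℝ) ≤ 1 - c := by linarith
    have := mul_le_mul_of_nonneg_left hA h1c
    have := mul_le_mul_of_nonneg_left hB hc0
    linarith
  have hRm0 : 0 ≤ R m := hR0 m hmr
  calc R w ≤ (1 - c) * (∑ i, l i * (2 * R (x i))) + c * (2 * R m) := step2
  _ = 2 * (1 - c) * (∑ i, l i * R (x i)) + 2 * (c * R m) := by
      have h2s : ∑ i, l i * (2 * R (x i)) = 2 * ∑ i, l i * R (x i) := by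
        rw [Finset.mul_sum]; exact Finset.sum_congr rfl (fun i _ => by ring)
      rw [h2s]; ring
  _ ≤ 2 * (∑ i, l i * R (x i)) + 2 * (ν * R m) := by
      have h1 : c * R m ≤ ν * R m := mul_le_mul_of_nonneg_right hcν hRm0
      have h2 : (1 - c) * (∑ i, l i * R (x i)) ≤ 1 * (∑ i, l i * R (x i)) :=
        mul_le_mul_of_nonneg_right (by linarith) hSx0
      nlinarith
  _ ≤ 4 * ∑ i, l i * R (x i) := by linarith [key2]



/-- If the revenue curve `R w = w (1 - F w)` of a CDF `F` is non-increasing on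
`[r, ∞)` and `F` is concave there, then `R` is 4-approximately convex on
`[r, ∞)`, and there is a convex non-increasing `R̂` with `R̂ ≤ R ≤ 4 R̂` there. -/
theorem stmt2 (F : ℝ → ℝ) (hFmono : Monotone F)
    (hF0 : ∀ w, 0 ≤ F w) (hF1 : ∀ w, F w ≤ 1)
    (R : ℝ → ℝ) (hR : ∀ w, R w = w * (1 - F w))
    (r : ℝ) (hr : 0 ≤ r)
    (hRmono : AntitoneOn R (Set.Ici r))
    (hFconc : ConcaveOn ℝ (Set.Ici r) F) :
    (∀ x y α : ℝ, r ≤ x → r ≤ y → 0 ≤ α → α ≤ 1 →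
        R (α * x + (1 - α) * y) ≤ 4 * α * R x + 4 * (1 - α) * R y) ∧
    ∃ Rhat : ℝ → ℝ, ConvexOn ℝ (Set.Ici r) Rhat ∧ AntitoneOn Rhat (Set.Ici r) ∧
      ∀ w, r ≤ w → Rhat w ≤ R w ∧ R w ≤ 4 * Rhat w := by
  have hR0 : ∀ u, r ≤ u → 0 ≤ R u := by
    intro u hu
    rw [hR]
    exact mul_nonneg (le_trans hr hu) (by linarith [hF1 u])
  -- Part 1 via the n-point lemma with n = 2
  have pair : ∀ x y α : ℝ, r ≤ x → r ≤ y → 0 ≤ α → α ≤ 1 →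
      R (α * x + (1 - α) * y) ≤ 4 * α * R x + 4 * (1 - α) * R y := by
    intro x y α hx hy hα0 hα1
    have h := npoint F hFmono hF1 R hR r hr hRmono hFconc 2 ![x, y] ![α, 1 - α]
      (by intro i; fin_cases i <;> simpa) (by intro i; fin_cases i <;> simp <;> linarith)
      (by simp [Fin.sum_univ_two])
    simp only [Fin.sum_univ_two, Matrix.cons_val_zero, Matrix.cons_val_one, Matrix.head_cons] at h
    linarith
  refine ⟨pair, ?_⟩
  -- the convex envelope via all finite convex combinations
  set S : ℝ → Set ℝ := fun w => {v : ℝ | ∃ n : ℕ, ∃ x : Fin n → ℝ, ∃ l : Fin n → ℝ,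
    (∀ i, r ≤ x i) ∧ (∀ i, 0 ≤ l i) ∧ (∑ i, l i = 1) ∧ (∑ i, l i * x i = w) ∧
    (∑ i, l i * R (x i) = v)} with hS
  have hmemR : ∀ w, r ≤ w → R w ∈ S w := by
    intro w hw
    exact ⟨1, fun _ => w, fun _ => 1, fun _ => hw, fun _ => zero_le_one, by simp, by simp, by simp⟩
  have hlow : ∀ w, r ≤ w → ∀ v ∈ S w, R w / 4 ≤ v := by
    intro w hw v hv
    obtain ⟨n, x, l, hx, hl, hl1, hsum, hval⟩ := hv
    have := npoint F hFmono hF1 R hR r hr hRmono hFconc n x l hx hl hl1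
    rw [hsum, hval] at this
    linarith
  have hbdd : ∀ w, r ≤ w → BddBelow (S w) := by
    intro w hw
    exact ⟨R w / 4, fun v hv => hlow w hw v hv⟩
  set Rhat : ℝ → ℝ := fun w => sInf (S w) with hRhat
  have hle : ∀ w, r ≤ w → Rhat w ≤ R w := fun w hw => csInf_le (hbdd w hw) (hmemR w hw)
  have hge : ∀ w, r ≤ w → R w ≤ 4 * Rhat w := by
    intro w hw
    have : R w / 4 ≤ Rhat w := le_csInf ⟨R w, hmemR w hw⟩ (hlow w hw)
    linarith
  have hanti : AntitoneOn Rhat (Set.Ici r) := by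
    intro w1 hw1 w2 hw2 h12
    apply le_csInf ⟨R w1, hmemR w1 hw1⟩
    intro v hv
    obtain ⟨n, x, l, hx, hl, hl1, hsum, hval⟩ := hv
    have hmem2 : (∑ i, l i * R (x i + (w2 - w1))) ∈ S w2 := by
      refine ⟨n, fun i => x i + (w2 - w1), l,
        fun i => by show r ≤ x i + (w2 - w1); have := hx i; linarith,
        hl, hl1, ?_, rfl⟩
      have : ∑ i, l i * (x i + (w2 - w1)) = (∑ i, l i * x i) + (∑ i, l i) * (w2 - w1) := by
        rw [Finset.sum_mul, ← Finset.sum_add_distrib]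
        exact Finset.sum_congr rfl (fun i _ => by ring)
      rw [this, hsum, hl1]; ring
    have hvle : (∑ i, l i * R (x i + (w2 - w1))) ≤ v := by
      rw [← hval]
      refine Finset.sum_le_sum fun i _ => mul_le_mul_of_nonneg_left ?_ (hl i)
      exact hRmono (hx i) (by show r ≤ x i + (w2 - w1); have := hx i; linarith)
        (by show x i ≤ x i + (w2 - w1); linarith)
    exact le_trans (csInf_le (hbdd w2 hw2) hmem2) hvle
  have hconv : ConvexOn ℝ (Set.Ici r) Rhat := by
    refine ⟨convex_Ici r, ?_⟩
    intro a ha b hb t s ht hs hts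
    simp only [smul_eq_mul]
    have hwmem : r ≤ t * a + s * b := by
      have : r = t * r + s * r := by rw [← add_mul, hts, one_mul]
      rw [this]
      gcongr <;> [exact ha; exact hb]
    -- key: Rhat (t*a+s*b) ≤ t*v1 + s*v2 for all v1 ∈ S a, v2 ∈ S b
    have key : ∀ v1 ∈ S a, ∀ v2 ∈ S b, Rhat (t * a + s * b) ≤ t * v1 + s * v2 := by
      intro v1 hv1 v2 hv2
      obtain ⟨n1, x1, l1, hx1, hl1, hl11, hsum1, hval1⟩ := hv1
      obtain ⟨n2, x2, l2, hx2, hl2, hl21, hsum2, hval2⟩ := hv2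
      apply csInf_le (hbdd _ hwmem)
      refine ⟨n1 + n2, Fin.append x1 x2, Fin.append (fun i => t * l1 i) (fun i => s * l2 i),
        ?_, ?_, ?_, ?_, ?_⟩
      · intro i
        refine Fin.addCases (fun j => ?_) (fun j => ?_) i
        · rw [Fin.append_left]; exact hx1 j
        · rw [Fin.append_right]; exact hx2 j
      · intro i
        refine Fin.addCases (fun j => ?_) (fun j => ?_) i
        · rw [Fin.append_left]; exact mul_nonneg ht (hl1 j)
        · rw [Fin.append_right]; exact mul_nonneg hs (hl2 j)
      · rw [Fin.sum_univ_add]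
        simp only [Fin.append_left, Fin.append_right]
        rw [← Finset.mul_sum, ← Finset.mul_sum, hl11, hl21]
        rw [mul_one, mul_one]; exact hts
      · rw [Fin.sum_univ_add]
        simp only [Fin.append_left, Fin.append_right]
        have e1 : ∑ j, t * l1 j * x1 j = t * ∑ j, l1 j * x1 j := by
          rw [Finset.mul_sum]; exact Finset.sum_congr rfl (fun j _ => by ring)
        have e2 : ∑ j, s * l2 j * x2 j = s * ∑ j, l2 j * x2 j := by
          rw [Finset.mul_sum]; exact Finset.sum_congr rfl (fun j _ => by ring)
        rw [e1, e2, hsum1, hsum2]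
      · rw [Fin.sum_univ_add]
        simp only [Fin.append_left, Fin.append_right]
        have e1 : ∑ j, t * l1 j * R (x1 j) = t * ∑ j, l1 j * R (x1 j) := by
          rw [Finset.mul_sum]; exact Finset.sum_congr rfl (fun j _ => by ring)
        have e2 : ∑ j, s * l2 j * R (x2 j) = s * ∑ j, l2 j * R (x2 j) := by
          rw [Finset.mul_sum]; exact Finset.sum_congr rfl (fun j _ => by ring)
        rw [e1, e2, hval1, hval2]
    -- conclude via epsilon argument
    refine le_of_forall_pos_le_add ?_
    intro ε hε
    obtain ⟨v1, hv1, hv1'⟩ := Real.lt_sInf_add_pos ⟨R a, hmemR a (Set.mem_Ici.mp ha)⟩ hε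
    obtain ⟨v2, hv2, hv2'⟩ := Real.lt_sInf_add_pos ⟨R b, hmemR b (Set.mem_Ici.mp hb)⟩ hε
    have h := key v1 hv1 v2 hv2
    have ht1 : t * v1 ≤ t * (sInf (S a) + ε) := mul_le_mul_of_nonneg_left hv1'.le ht
    have hs1 : s * v2 ≤ s * (sInf (S b) + ε) := mul_le_mul_of_nonneg_left hv2'.le hs
    have : Rhat (t * a + s * b) ≤ t * (sInf (S a) + ε) + s * (sInf (S b) + ε) := by linarith
    have heq : t * (sInf (S a) + ε) + s * (sInf (S b) + ε)
        = t * Rhat a + s * Rhat b + ε := by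
      rw [hRhat]; simp only []; nlinarith [hts]
    linarith [heq ▸ this]
  exact ⟨Rhat, hconv, hanti, fun w hw => ⟨hle w hw, hge w hw⟩⟩
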